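/- Let a < b, let p : ℝ → ℝ be continuous and positive on (a,b), let c ∈ (a,b), and suppose the function s ↦ (p(s))^{-1/2} is NOT integrable on (c,b). Let E > 0, let t₀ < T with T ∈ ℝ, and let x : ℝ → ℝ be differentiable on [t₀, T) with x(t₀) = c, x(t) ∈ (a,b) and x′(t) = 2·√E·√(p(x(t))) for all t ∈ [t₀, T). Then there exists b′ < b such that x(t) ≤ b′ for all t ∈ [t₀, T); in particular x(t) does not tend to b as t → T. (The Hamiltonian vector field is complete at the endpoint b when 1/√p ∉ L¹(c,b).) -/

import Mathlib

open MeasureTheory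

/-- Completeness of the Hamiltonian vector field at the endpoint `b` when
`1/√p ∉ L¹(c,b)`: a trajectory of `x' = 2·√E·√(p(x))` starting at `c` and defined on a
finite time interval `[t₀, T)` stays below some `b' < b`; in particular it does not
reach `b` in finite time. -/
theorem hamiltonian_complete_at_endpoint_of_not_integrable
    (a b : ℝ) (hab : a < b) (p : ℝ → ℝ)
    (hp : ContinuousOn p (Set.Ioo a b))
    (hppos : ∀ s ∈ Set.Ioo a b, 0 < p s)
    (c : ℝ) (hc : c ∈ Set.Ioo a b)
    (hnotint : ¬ IntegrableOn (fun s => 1 / Real.sqrt (p s)) (Set.Ioo c b))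
    (E : ℝ) (hE : 0 < E)
    (t₀ T : ℝ) (hT : t₀ < T)
    (x : ℝ → ℝ) (hx0 : x t₀ = c)
    (hxab : ∀ t ∈ Set.Ico t₀ T, x t ∈ Set.Ioo a b)
    (hx : ∀ t ∈ Set.Ico t₀ T,
      HasDerivAt x (2 * Real.sqrt E * Real.sqrt (p (x t))) t) :
    ∃ b' : ℝ, b' < b ∧ ∀ t ∈ Set.Ico t₀ T, x t ≤ b' := by
  set f : ℝ → ℝ := fun s => 1 / Real.sqrt (p s) with hf_def
  have hf_nonneg : ∀ s, 0 ≤ f s := fun s => one_div_nonneg.mpr (Real.sqrt_nonneg _)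
  have hf_cont : ContinuousOn f (Set.Ioo a b) := by
    apply continuousOn_const.div (Real.continuous_sqrt.comp_continuousOn hp)
    intro s hs
    exact ne_of_gt (Real.sqrt_pos.mpr (hppos s hs))
  have hInt : ∀ y ∈ Set.Ioo a b, ∀ z ∈ Set.Ioo a b, IntervalIntegrable f volume y z :=
    fun y hy z hz =>
      (hf_cont.mono (Set.ordConnected_Ioo.uIcc_subset hy hz)).intervalIntegrable
  set F : ℝ → ℝ := fun y => ∫ s in c..y, f s with hF_def
  have hF_deriv : ∀ y ∈ Set.Ioo a b, HasDerivAt F (f y) y := fun y hy =>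
    intervalIntegral.integral_hasDerivAt_right (hInt c hc y hy)
      (hf_cont.stronglyMeasurableAtFilter isOpen_Ioo y hy)
      (hf_cont.continuousAt (isOpen_Ioo.mem_nhds hy))
  set M : ℝ := 2 * Real.sqrt E * (T - t₀) with hM_def
  -- along the trajectory, F (x t) = 2√E (t - t₀) ≤ M
  have hkey : ∀ t ∈ Set.Ico t₀ T, F (x t) = 2 * Real.sqrt E * (t - t₀) := by
    intro t1 ht1
    have hsub : Set.Icc t₀ t1 ⊆ Set.Ico t₀ T := fun t ht =>
      ⟨ht.1, lt_of_le_of_lt ht.2 ht1.2⟩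
    have hderiv : ∀ t ∈ Set.Ico t₀ t1,
        HasDerivWithinAt (fun t => F (x t)) (2 * Real.sqrt E) (Set.Ici t) t := by
      intro t ht
      have htT : t ∈ Set.Ico t₀ T := hsub ⟨ht.1, ht.2.le⟩
      have hx' := (hF_deriv (x t) (hxab t htT)).comp t (hx t htT)
      have hval : f (x t) * (2 * Real.sqrt E * Real.sqrt (p (x t))) = 2 * Real.sqrt E := by
        have hpos : Real.sqrt (p (x t)) ≠ 0 :=
          ne_of_gt (Real.sqrt_pos.mpr (hppos _ (hxab t htT)))
        field_simp [hf_def]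
        exact one_div_mul_cancel hpos
      rw [hval] at hx'
      exact hx'.hasDerivWithinAt
    have hg : ∀ t ∈ Set.Ico t₀ t1,
        HasDerivWithinAt (fun t : ℝ => 2 * Real.sqrt E * (t - t₀)) (2 * Real.sqrt E)
          (Set.Ici t) t := by
      intro t _
      simpa using (((hasDerivAt_id t).sub_const t₀).const_mul (2 * Real.sqrt E)).hasDerivWithinAt
    have hfc : ContinuousOn (fun t => F (x t)) (Set.Icc t₀ t1) := by
      intro t ht
      rcases lt_or_eq_of_le ht.2 with h | h
      · exact (((hF_deriv (x t) (hxab t (hsub ht))).comp t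
          (hx t (hsub ht))).continuousAt).continuousWithinAt
      · subst h
        exact (((hF_deriv (x t) (hxab t ht1)).comp t (hx t ht1)).continuousAt).continuousWithinAt
    have hgc : ContinuousOn (fun t : ℝ => 2 * Real.sqrt E * (t - t₀)) (Set.Icc t₀ t1) :=
      (continuous_const.mul (continuous_id.sub continuous_const)).continuousOn
    have heq := eq_of_has_deriv_right_eq hderiv hg hfc hgc
      (by simp [hx0, hF_def, intervalIntegral.integral_same])
    exact heq t1 ⟨ht1.1, le_rfl⟩
  have hFle : ∀ t ∈ Set.Ico t₀ T, F (x t) ≤ M := by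
    intro t ht
    rw [hkey t ht, hM_def]
    have h2E : 0 ≤ 2 * Real.sqrt E := by positivity
    exact mul_le_mul_of_nonneg_left (by linarith [ht.2]) h2E
  -- F is unbounded on (c, b)
  have hunb : ∃ y ∈ Set.Ioo c b, M < F y := by
    by_contra h
    push_neg at h
    obtain ⟨u, hu_mono, hu_lt, hu_tend⟩ := exists_seq_strictMono_tendsto b
    apply hnotint
    have hIoc : IntegrableOn f (Set.Ioc c b) := by
      apply MeasureTheory.integrableOn_Ioc_of_intervalIntegral_norm_bounded_right
        (b := u) (I := M) ?_ hu_tend ?_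
      · intro i
        rcases le_or_gt (u i) c with h1 | h1
        · rw [Set.Ioc_eq_empty (by exact not_lt.mpr h1)]
          exact integrableOn_empty
        · have hui : u i ∈ Set.Ioo a b := ⟨hc.1.trans h1, hu_lt i⟩
          exact (hInt c hc (u i) hui).1
      · have hev : ∀ᶠ i in Filter.atTop, c < u i :=
          hu_tend.eventually (eventually_gt_nhds hc.2)
        filter_upwards [hev] with i hi
        have hui : u i ∈ Set.Ioo c b := ⟨hi, hu_lt i⟩
        have h1 : (∫ s in Set.Ioc c (u i), ‖f s‖) = ∫ s in Set.Ioc c (u i), f s := by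
          congr 1
          ext s
          exact Real.norm_of_nonneg (hf_nonneg s)
        have hFu : F (u i) = ∫ s in Set.Ioc c (u i), f s :=
          intervalIntegral.integral_of_le hi.le
        rw [h1, ← hFu]
        exact h (u i) hui
    exact hIoc.mono_set Set.Ioo_subset_Ioc_self
  obtain ⟨y₀, hy₀, hFy₀⟩ := hunb
  have hy₀ab : y₀ ∈ Set.Ioo a b := ⟨hc.1.trans hy₀.1, hy₀.2⟩
  refine ⟨y₀, hy₀.2, fun t ht => ?_⟩
  by_contra hlt
  push_neg at hlt
  have hxt : x t ∈ Set.Ioo a b := hxab t ht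
  -- F (x t) ≥ F y₀ > M ≥ F (x t), contradiction
  have hmono : F y₀ ≤ F (x t) := by
    have hsub : F (x t) - F y₀ = ∫ s in y₀..(x t), f s :=
      intervalIntegral.integral_interval_sub_left (hInt c hc _ hxt) (hInt c hc _ hy₀ab)
    have hnn : 0 ≤ ∫ s in y₀..(x t), f s :=
      intervalIntegral.integral_nonneg hlt.le (fun s _ => hf_nonneg s)
    linarith [hsub, hnn]
  linarith [hFle t ht, hFy₀]
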